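/- (Proposition 1.) Under the game setup, assume the pseudo-gradient F is ε-strongly monotone for some ε > 0 and that x* ∈ E satisfies F(x*) = 0. Let L be an N×N real matrix with L·1_N = 0, 1_Nᵀ·L = 0, and whose kernel is exactly the span of 1_N (as holds for the ω-rescaled Laplacian of a strongly connected digraph). Let κ > 0 and suppose the stacked vector X = (X_1,…,X_N) ∈ E^N satisfies, for every i, 0 = −ι_i(F_i(X_i)) − κ Σ_j L_{ij} X_j. Then X_i = x* for every i; that is, all players' estimate vectors coincide and equal the Nash equilibrium x*, and in particular each player's own action component equals its equilibrium action. -/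

import Mathlib

open scoped RealInnerProductSpace

noncomputable section

/-- The profile space `E = E_1 × ⋯ × E_N` with the product (ℓ²) inner product,
where `E_i = ℝ^{n i}`. -/
abbrev GSpace {N : ℕ} (n : Fin N → ℕ) : Type :=
  PiLp 2 (fun j : Fin N => EuclideanSpace ℝ (Fin (n j)))

/-- `ι_i`: the linear embedding of `E_i` into `E` placing a vector in the `i`-th
block and zero elsewhere. -/
def blockEmb {N : ℕ} (n : Fin N → ℕ) (i : Fin N)
    (z : EuclideanSpace ℝ (Fin (n i))) : GSpace n :=
  WithLp.toLp 2 (Pi.single i z)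

/-- **Proposition 1.** If the pseudo-gradient `F` is `ε`-strongly
monotone with zero `x*`, `L` is an `N×N` matrix with `L·1 = 0`, `1ᵀL = 0` and kernel
exactly the span of `1`, `κ > 0`, and the stacked vector `X` satisfies
`0 = −ι_i(F_i(X_i)) − κ Σ_j L_{ij} X_j` for all `i`, then `X_i = x*` for all `i`. -/
theorem equilibrium_of_augmented_dynamics_is_NE
    (N : ℕ) (hN : 1 ≤ N) (n : Fin N → ℕ)
    (Fp : ∀ i : Fin N, GSpace n → EuclideanSpace ℝ (Fin (n i)))
    (F : GSpace n → GSpace n) (hFdef : ∀ x i, F x i = Fp i x)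
    (ε : ℝ) (hε : 0 < ε)
    (hmono : ∀ x y : GSpace n, ε * ‖x - y‖ ^ 2 ≤ ⟪x - y, F x - F y⟫)
    (xstar : GSpace n) (hstar : F xstar = 0)
    (L : Matrix (Fin N) (Fin N) ℝ)
    (hL1 : L.mulVec (fun _ => 1) = 0)
    (hL2 : Matrix.vecMul (fun _ => 1) L = 0)
    (hker : ∀ v : Fin N → ℝ, L.mulVec v = 0 → ∃ c : ℝ, v = fun _ => c)
    (κ : ℝ) (hκ : 0 < κ)
    (X : Fin N → GSpace n)
    (heq : ∀ i, (0 : GSpace n) =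
      -blockEmb n i (Fp i (X i)) - κ • ∑ j, L i j • X j) :
    ∀ i, X i = xstar := by
  have key : ∀ i, blockEmb n i (Fp i (X i)) + κ • ∑ j, L i j • X j = 0 := by
    intro i
    have h2 : -(blockEmb n i (Fp i (X i)) + κ • ∑ j, L i j • X j) = 0 := by
      rw [neg_add, ← sub_eq_add_neg]; exact (heq i).symm
    exact neg_eq_zero.mp h2
  -- column sums of L vanish
  have hcol : ∀ j, ∑ i, L i j = 0 := by
    intro j
    have := congrFun hL2 j
    simpa [Matrix.vecMul, dotProduct] using this
  -- sum of block embeddings vanishes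
  have hsum : ∑ i, blockEmb n i (Fp i (X i)) = 0 := by
    have h1 : ∑ i, (blockEmb n i (Fp i (X i)) + κ • ∑ j, L i j • X j)
        = (0 : GSpace n) := by simp [key]
    rw [Finset.sum_add_distrib] at h1
    have h2 : ∑ i, κ • ∑ j, L i j • X j = (0 : GSpace n) := by
      rw [← Finset.smul_sum, Finset.sum_comm]
      have : ∀ j : Fin N, ∑ i, L i j • X j = (0 : GSpace n) := by
        intro j
        rw [← Finset.sum_smul, hcol j, zero_smul]
      simp [this]
    rw [h2, add_zero] at h1
    exact h1
  -- hence each Fp i (X i) = 0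
  have hFz : ∀ i, Fp i (X i) = 0 := by
    intro i
    have h := congrArg (fun v : GSpace n => v i) hsum
    have h2 : (∑ i', blockEmb n i' (Fp i' (X i'))) i = Fp i (X i) := by
      have := Finset.univ_sum_single (f := fun i' => Fp i' (X i'))
      calc (∑ i', blockEmb n i' (Fp i' (X i'))) i
          = (∑ i', Pi.single i' (Fp i' (X i'))) i := by simp [blockEmb, WithLp.ofLp_sum]
        _ = Fp i (X i) := by rw [this]
    rw [h2] at h
    exact h
  -- hence each Laplacian combination vanishes
  have hS : ∀ i, ∑ j, L i j • X j = (0 : GSpace n) := by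
    intro i
    have h := key i
    rw [hFz i] at h
    simp only [blockEmb, Pi.single_zero, WithLp.toLp_zero, zero_add] at h
    rcases smul_eq_zero.mp h with h' | h'
    · exact absurd h' (ne_of_gt hκ)
    · exact h'
  -- consensus
  obtain ⟨i0, -⟩ : ∃ i0 : Fin N, True := ⟨⟨0, hN⟩, trivial⟩
  have hcons : ∀ j, X j = X i0 := by
    have hcoord : ∀ (k : Fin N) (m : Fin (n k)), ∃ c : ℝ,
        (fun j => X j k m) = fun _ => c := by
      intro k m
      apply hker
      funext i
      have h := congrArg (fun v : GSpace n => v k m) (hS i)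
      have h2 : (∑ j, L i j • X j) k m = ∑ j, L i j * X j k m := by
        simp [WithLp.ofLp_sum, Finset.sum_apply, PiLp.smul_apply]
      rw [h2] at h
      simpa [Matrix.mulVec, dotProduct] using h
    intro j
    ext k m
    obtain ⟨c, hc⟩ := hcoord k m
    have h1 := congrFun hc j
    have h2 := congrFun hc i0
    simp only at h1 h2
    rw [h1, h2]
  -- F (X i0) = 0
  have hF0 : F (X i0) = 0 := by
    ext i : 1
    rw [hFdef]
    have : X i0 = X i := (hcons i).symm
    rw [this, hFz i]
    rfl
  -- strong monotonicity forces X i0 = xstar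
  have hXi0 : X i0 = xstar := by
    have h := hmono (X i0) xstar
    rw [hF0, hstar, sub_zero, inner_zero_right] at h
    have hn : ‖X i0 - xstar‖ ^ 2 ≤ 0 := by nlinarith [sq_nonneg ‖X i0 - xstar‖]
    have : ‖X i0 - xstar‖ = 0 := by nlinarith [norm_nonneg (X i0 - xstar)]
    have := norm_eq_zero.mp this
    exact sub_eq_zero.mp this
  intro i
  rw [hcons i, hXi0]
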